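/- Let F ⊆ C([n],k) and 1 ≤ i ≠ j ≤ n. Then |T²(F)| ≤ |T²(S_{ij}(F))|, where T²(H) = {T ∈ C([n],2) : T ∩ H ≠ ∅ for all H ∈ H} is the set of 2-element transversals of H. -/

import Mathlib

/-- The image of a single set under the (i,j)-shift relative to the family F. -/
def shiftSet (i j : ℕ) (F : Finset (Finset ℕ)) (A : Finset ℕ) : Finset ℕ :=
  if j ∈ A ∧ i ∉ A ∧ insert i (A.erase j) ∉ F then insert i (A.erase j) else A

/-- The (i,j)-shift of a family. -/
def shiftFam (i j : ℕ) (F : Finset (Finset ℕ)) : Finset (Finset ℕ) :=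
  F.image (shiftSet i j F)

/-- The 2-element transversals of a family, within [n]. -/
def T2 (n : ℕ) (H : Finset (Finset ℕ)) : Finset (Finset ℕ) :=
  ((Finset.Icc 1 n).powersetCard 2).filter (fun T => ∀ A ∈ H, (T ∩ A).Nonempty)

lemma mem_T2_iff {n : ℕ} {H : Finset (Finset ℕ)} {T : Finset ℕ} :
    T ∈ T2 n H ↔ (T ⊆ Finset.Icc 1 n ∧ T.card = 2) ∧ ∀ A ∈ H, (T ∩ A).Nonempty := by
  simp [T2, Finset.mem_filter, Finset.mem_powersetCard]

lemma shiftFam_cases {i j : ℕ} {F : Finset (Finset ℕ)} {B : Finset ℕ}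
    (h : B ∈ shiftFam i j F) :
    (B ∈ F ∧ (i ∉ B → j ∈ B → insert i (B.erase j) ∈ F)) ∨
    ∃ A ∈ F, j ∈ A ∧ i ∉ A ∧ insert i (A.erase j) ∉ F ∧ B = insert i (A.erase j) := by
  obtain ⟨A, hA, rfl⟩ := Finset.mem_image.mp h
  by_cases hc : j ∈ A ∧ i ∉ A ∧ insert i (A.erase j) ∉ F
  · right
    exact ⟨A, hA, hc.1, hc.2.1, hc.2.2, by simp [shiftSet, hc]⟩
  · left
    have hEq : shiftSet i j F A = A := by simp only [shiftSet, if_neg hc]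
    rw [hEq]
    refine ⟨hA, fun hiA hjA => ?_⟩
    by_contra hC
    exact hc ⟨hjA, hiA, hC⟩

/-- If T is a 2-transversal of F but not of the shifted family, then j ∈ T, i ∉ T,
and there is a shifted witness disjoint from T. -/
lemma witness {n i j : ℕ} (hij : i ≠ j) {F : Finset (Finset ℕ)} {T : Finset ℕ}
    (hT : T ∈ T2 n F) (hT' : T ∉ T2 n (shiftFam i j F)) :
    j ∈ T ∧ i ∉ T ∧ ∃ A ∈ F, j ∈ A ∧ i ∉ A ∧ insert i (A.erase j) ∉ F ∧
      T ∩ insert i (A.erase j) = ∅ := by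
  rw [mem_T2_iff] at hT hT'
  obtain ⟨hTs, hTtr⟩ := hT
  push_neg at hT'
  obtain ⟨B, hB, hBdisj⟩ := hT' hTs
  rcases shiftFam_cases hB with ⟨hBF, -⟩ | ⟨A, hA, hjA, hiA, hAn, rfl⟩
  · exact absurd (hTtr B hBF) (by rw [hBdisj]; simp)
  · have hiT : i ∉ T := fun hiT => by
      have : i ∈ T ∩ insert i (A.erase j) := Finset.mem_inter.mpr ⟨hiT, Finset.mem_insert_self _ _⟩
      rw [hBdisj] at this; exact absurd this (Finset.notMem_empty _)
    have hjT : j ∈ T := by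
      obtain ⟨y, hy⟩ := hTtr A hA
      rw [Finset.mem_inter] at hy
      by_contra hjT
      have hyj : y ≠ j := fun h => hjT (h ▸ hy.1)
      have : y ∈ T ∩ insert i (A.erase j) :=
        Finset.mem_inter.mpr ⟨hy.1, Finset.mem_insert_of_mem (Finset.mem_erase.mpr ⟨hyj, hy.2⟩)⟩
      rw [hBdisj] at this; exact absurd this (Finset.notMem_empty _)
    exact ⟨hjT, hiT, A, hA, hjA, hiA, hAn, hBdisj⟩

/-- The shifted transversal is a transversal of the shifted family. -/
lemma shifted_mem {n i j : ℕ} (hi : 1 ≤ i) (hin : i ≤ n) (hij : i ≠ j)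
    {F : Finset (Finset ℕ)} {T : Finset ℕ}
    (hT : T ∈ T2 n F) (hT' : T ∉ T2 n (shiftFam i j F)) :
    insert i (T.erase j) ∈ T2 n (shiftFam i j F) := by
  obtain ⟨hjT, hiT, -⟩ := witness hij hT hT'
  rw [mem_T2_iff] at hT ⊢
  obtain ⟨⟨hTs, hTc⟩, hTtr⟩ := hT
  have hiTe : i ∉ T.erase j := fun h => hiT (Finset.mem_of_mem_erase h)
  refine ⟨⟨?_, ?_⟩, ?_⟩
  · intro x hx
    rcases Finset.mem_insert.mp hx with rfl | hx
    · exact Finset.mem_Icc.mpr ⟨hi, hin⟩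
    · exact hTs (Finset.mem_of_mem_erase hx)
  · rw [Finset.card_insert_of_notMem hiTe, Finset.card_erase_of_mem hjT, hTc]
  · intro B hB
    by_cases hiB : i ∈ B
    · exact ⟨i, Finset.mem_inter.mpr ⟨Finset.mem_insert_self _ _, hiB⟩⟩
    · rcases shiftFam_cases hB with ⟨hBF, hBcl⟩ | ⟨A, hA, hjA, hiA, hAn, rfl⟩
      · obtain ⟨y, hy⟩ := hTtr B hBF
        rw [Finset.mem_inter] at hy
        by_cases hyj : y = j
        · -- j ∈ B, so insert i (B.erase j) ∈ F
          have hjB : j ∈ B := hyj ▸ hy.2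
          have hC : insert i (B.erase j) ∈ F := hBcl hiB hjB
          obtain ⟨z, hz⟩ := hTtr _ hC
          rw [Finset.mem_inter] at hz
          have hzi : z ≠ i := fun h => hiT (h ▸ hz.1)
          have hzB : z ∈ B.erase j := by
            rcases Finset.mem_insert.mp hz.2 with h | h
            · exact absurd h hzi
            · exact h
          refine ⟨z, Finset.mem_inter.mpr ⟨?_, Finset.mem_of_mem_erase hzB⟩⟩
          exact Finset.mem_insert_of_mem
            (Finset.mem_erase.mpr ⟨(Finset.mem_erase.mp hzB).1, hz.1⟩)
        · exact ⟨y, Finset.mem_inter.mpr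
            ⟨Finset.mem_insert_of_mem (Finset.mem_erase.mpr ⟨hyj, hy.1⟩), hy.2⟩⟩
      · exact absurd (Finset.mem_insert_self i _) hiB

/-- Mixed case contradiction for injectivity. -/
lemma mixed_case {n i j : ℕ} (hij : i ≠ j) {F : Finset (Finset ℕ)} {T₁ T₂ : Finset ℕ}
    (h1 : T₁ ∈ T2 n F) (h1' : T₁ ∈ T2 n (shiftFam i j F))
    (h2 : T₂ ∈ T2 n F) (h2' : T₂ ∉ T2 n (shiftFam i j F))
    (heq : T₁ = insert i (T₂.erase j)) : False := by
  obtain ⟨hjT2, hiT2, A, hA, hjA, hiA, hAn, hdisj⟩ := witness hij h2 h2'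
  rw [mem_T2_iff] at h1
  obtain ⟨y, hy⟩ := h1.2 A hA
  rw [Finset.mem_inter] at hy
  have hyi : y ≠ i := fun h => hiA (h ▸ hy.2)
  have hyT2e : y ∈ T₂.erase j := by
    have := hy.1
    rw [heq, Finset.mem_insert] at this
    rcases this with h | h
    · exact absurd h hyi
    · exact h
  have hyj : y ≠ j := (Finset.mem_erase.mp hyT2e).1
  have : y ∈ T₂ ∩ insert i (A.erase j) :=
    Finset.mem_inter.mpr ⟨Finset.mem_of_mem_erase hyT2e,
      Finset.mem_insert_of_mem (Finset.mem_erase.mpr ⟨hyj, hy.2⟩)⟩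
  rw [hdisj] at this
  exact absurd this (Finset.notMem_empty _)

/-- Claim 2.3: shifting does not decrease the number of 2-transversals. -/
theorem stmt11 (n k i j : ℕ) (hi : 1 ≤ i) (hin : i ≤ n) (hj : 1 ≤ j) (hjn : j ≤ n)
    (hij : i ≠ j)
    (F : Finset (Finset ℕ))
    (hF : F ⊆ (Finset.Icc 1 n).powersetCard k) :
    (T2 n F).card ≤ (T2 n (shiftFam i j F)).card := by
  classical
  apply Finset.card_le_card_of_injOn
    (fun T => if T ∈ T2 n (shiftFam i j F) then T else insert i (T.erase j))
  · intro T hT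
    by_cases h : T ∈ T2 n (shiftFam i j F)
    · simpa [h]
    · simpa [h] using shifted_mem hi hin hij hT h
  · intro T₁ h1 T₂ h2 heq
    simp only at heq
    by_cases c1 : T₁ ∈ T2 n (shiftFam i j F) <;> by_cases c2 : T₂ ∈ T2 n (shiftFam i j F)
    · rwa [if_pos c1, if_pos c2] at heq
    · rw [if_pos c1, if_neg c2] at heq
      exact absurd (mixed_case hij h1 c1 h2 c2 heq) (by simp)
    · rw [if_neg c1, if_pos c2] at heq
      exact absurd (mixed_case hij h2 c2 h1 c1 heq.symm) (by simp)
    · rw [if_neg c1, if_neg c2] at heq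
      obtain ⟨hjT1, hiT1, -⟩ := witness hij h1 c1
      obtain ⟨hjT2, hiT2, -⟩ := witness hij h2 c2
      have e1 : i ∉ T₁.erase j := fun h => hiT1 (Finset.mem_of_mem_erase h)
      have e2 : i ∉ T₂.erase j := fun h => hiT2 (Finset.mem_of_mem_erase h)
      have : T₁.erase j = T₂.erase j := by
        have := congrArg (Finset.erase · i) heq
        simpa [Finset.erase_insert e1, Finset.erase_insert e2] using this
      calc T₁ = insert j (T₁.erase j) := (Finset.insert_erase hjT1).symm
        _ = insert j (T₂.erase j) := by rw [this]
        _ = T₂ := Finset.insert_erase hjT2
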